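/- arXiv:1805.00384 — 2 statements merged into one kernel-verified Lean document; each statement's English description precedes it below -/
import Mathlib

section
/- Let ι and κ be finite index types, let (A_i)_{i∈ι} and (B_j)_{j∈κ} be families of nonabelian simple groups, and assume that for all i ∈ ι and j ∈ κ the groups A_i and B_j are not isomorphic. Set A = ∏_{i∈ι} A_i and B = ∏_{j∈κ} B_j. Then every subgroup H of A × B whose two coordinate projections map H onto A and onto B equals A × B. -/
open Subgroup

section Aux
variable {ι : Type*} (A : ι → Type*) [∀ i, Group (A i)]

theorem eval_surjective [DecidableEq ι] (i : ι) :
    Function.Surjective (Pi.evalMonoidHom A i) :=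
  fun x => ⟨Pi.mulSingle i x, Pi.mulSingle_eq_same i x⟩

/-- If a normal subgroup of a product of simple groups has nontrivial projection to a
nonabelian coordinate, it contains the whole coordinate factor. -/
theorem single_mem_of_eval_ne_bot [∀ i, IsSimpleGroup (A i)] [DecidableEq ι]
    (N : Subgroup (∀ i, A i)) (hN : N.Normal) (i : ι)
    (hnab : ∃ a b : A i, a * b ≠ b * a)
    (hne : Subgroup.map (Pi.evalMonoidHom A i) N ≠ ⊥) (a : A i) :
    Pi.mulSingle i a ∈ N := by
  -- the projection is all of A i
  have hPn : (Subgroup.map (Pi.evalMonoidHom A i) N).Normal :=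
    hN.map _ (eval_surjective A i)
  have hPtop : Subgroup.map (Pi.evalMonoidHom A i) N = ⊤ :=
    (hPn.eq_bot_or_eq_top).resolve_left hne
  -- the subgroup K of elements whose single lies in N
  set K : Subgroup (A i) := N.comap (MonoidHom.mulSingle A i) with hK
  have hKn : K.Normal := by
    constructor
    intro x hx g
    have : Pi.mulSingle i (g * x * g⁻¹)
        = Pi.mulSingle i g * Pi.mulSingle i x * (Pi.mulSingle i g)⁻¹ := by
      rw [← Pi.mulSingle_inv, ← Pi.mulSingle_mul, ← Pi.mulSingle_mul]
    simpa [K, Subgroup.mem_comap, MonoidHom.mulSingle_apply, this] using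
      hN.conj_mem _ hx (Pi.mulSingle i g)
  have hKne : K ≠ ⊥ := by
    obtain ⟨x, b, hxb⟩ := hnab
    -- find n ∈ N with n i = x
    have hx : x ∈ Subgroup.map (Pi.evalMonoidHom A i) N := by rw [hPtop]; trivial
    obtain ⟨n, hn, hni⟩ := hx
    have hm : n * Pi.mulSingle i b * n⁻¹ * (Pi.mulSingle i b)⁻¹ ∈ N := by
      have := hN.conj_mem _ (N.inv_mem hn) (Pi.mulSingle i b)
      have h2 := N.mul_mem hn this
      simpa [mul_assoc] using h2
    have hni' : n i = x := hni
    have heq : n * Pi.mulSingle i b * n⁻¹ * (Pi.mulSingle i b)⁻¹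
        = Pi.mulSingle i (x * b * x⁻¹ * b⁻¹) := by
      funext j
      by_cases hj : j = i
      · subst hj; simp [hni']
      · simp [Pi.mulSingle_eq_of_ne hj]
    intro hbot
    have : x * b * x⁻¹ * b⁻¹ ∈ K := by
      rw [hK, Subgroup.mem_comap, MonoidHom.mulSingle_apply, ← heq]; exact hm
    rw [hbot, Subgroup.mem_bot] at this
    apply hxb
    have h1 : x * b * x⁻¹ = b := by rwa [mul_inv_eq_one] at this
    calc x * b = x * b * x⁻¹ * x := by group
      _ = b * x := by rw [h1]
  have hKtop : K = ⊤ := hKn.eq_bot_or_eq_top.resolve_left hKne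
  have : a ∈ K := by rw [hKtop]; trivial
  simpa [hK, Subgroup.mem_comap, MonoidHom.mulSingle_apply] using this

end Aux

/-- Key step: if `H ≤ G × ∏ B j` is subdirect and there is a surjection `e : G →* S`
onto a simple group killing the left fiber `{g | (g,1) ∈ H}`, then `S` is isomorphic
to one of the `B j`. -/
theorem exists_iso_of_subdirect {G S : Type*} [Group G] [Group S] [IsSimpleGroup S]
    {κ : Type*} [Finite κ] (B : κ → Type*) [∀ j, Group (B j)] [∀ j, IsSimpleGroup (B j)]
    (H : Subgroup (G × (∀ j, B j)))
    (e : G →* S) (he : Function.Surjective e)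
    (hfst : ∀ g : G, ∃ b, (g, b) ∈ H)
    (hsnd : ∀ b : ∀ j, B j, ∃ g, (g, b) ∈ H)
    (hbot : ∀ g : G, (g, (1 : ∀ j, B j)) ∈ H → e g = 1) :
    ∃ j, Nonempty (B j ≃* S) := by
  classical
  -- uniqueness of e-value over a fiber
  have huniq : ∀ g g' b, (g, b) ∈ H → (g', b) ∈ H → e g = e g' := by
    intro g g' b h1 h2
    have : (g * g'⁻¹, (1 : ∀ j, B j)) ∈ H := by
      have := H.mul_mem h1 (H.inv_mem h2)
      simpa using this
    have := hbot _ this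
    simpa [map_mul, map_inv, mul_inv_eq_one] using this
  -- define f : ∏ B →* S
  choose g hg using hsnd
  have hfval : ∀ (a : G) (b), (a, b) ∈ H → e (g b) = e a := fun a b h =>
    huniq _ _ _ (hg b) h
  let f : (∀ j, B j) →* S :=
    { toFun := fun b => e (g b)
      map_one' := hbot _ (by simpa using hg 1)
      map_mul' := by
        intro b₁ b₂
        have h12 : (g b₁ * g b₂, b₁ * b₂) ∈ H := by
          simpa [Prod.mk_mul_mk] using H.mul_mem (hg b₁) (hg b₂)
        simpa [map_mul] using hfval _ _ h12 }
  have hfsurj : Function.Surjective f := by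
    intro s
    obtain ⟨a, ha⟩ := he s
    obtain ⟨b, hb⟩ := hfst a
    exact ⟨b, (hfval _ _ hb).trans ha⟩
  -- f is nontrivial on some single
  have hker : f.ker ≠ ⊤ := by
    intro h
    obtain ⟨s, t, hst⟩ := exists_pair_ne S
    obtain ⟨b, hb⟩ := hfsurj s
    obtain ⟨c, hc⟩ := hfsurj t
    have hbk : b ∈ f.ker := by rw [h]; trivial
    have hck : c ∈ f.ker := by rw [h]; trivial
    rw [MonoidHom.mem_ker] at hbk hck
    exact hst (by rw [← hb, ← hc, hbk, hck])
  have : ∃ j, ∃ x : B j, Pi.mulSingle j x ∉ f.ker := by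
    by_contra hcon
    push_neg at hcon
    apply hker
    rw [eq_top_iff]
    intro b _
    exact Subgroup.pi_mem_of_mulSingle_mem b fun j => hcon j (b j)
  obtain ⟨j, x, hx⟩ := this
  refine ⟨j, ⟨MulEquiv.ofBijective (f.comp (MonoidHom.mulSingle B j)) ⟨?_, ?_⟩⟩⟩
  · -- injective: kernel is not ⊤, hence ⊥ by simplicity
    rw [← MonoidHom.ker_eq_bot_iff]
    refine ((f.comp (MonoidHom.mulSingle B j)).normal_ker.eq_bot_or_eq_top).resolve_right ?_
    intro h
    apply hx
    have : x ∈ (f.comp (MonoidHom.mulSingle B j)).ker := by rw [h]; trivial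
    simpa [MonoidHom.mem_ker] using this
  · -- surjective: range is normal and nontrivial in simple S
    rw [← MonoidHom.range_eq_top]
    have hnr : ((MonoidHom.mulSingle B j).range).Normal := by
      constructor
      rintro _ ⟨y, rfl⟩ p
      refine ⟨p j * y * (p j)⁻¹, ?_⟩
      funext k
      by_cases hk : k = j
      · subst hk; simp
      · simp [MonoidHom.mulSingle_apply, Pi.mulSingle_eq_of_ne hk]
    have : (Subgroup.map f (MonoidHom.mulSingle B j).range).Normal := hnr.map f hfsurj
    have hrr : (f.comp (MonoidHom.mulSingle B j)).range
        = Subgroup.map f (MonoidHom.mulSingle B j).range := by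
      rw [MonoidHom.range_comp]
    rw [hrr]
    refine this.eq_bot_or_eq_top.resolve_left ?_
    intro h
    apply hx
    have : f (Pi.mulSingle j x) ∈ Subgroup.map f (MonoidHom.mulSingle B j).range :=
      ⟨Pi.mulSingle j x, ⟨x, rfl⟩, rfl⟩
    rw [h, Subgroup.mem_bot] at this
    simpa [MonoidHom.mem_ker] using this

/-- If `A = ∏ A i` and `B = ∏ B j` are finite products of nonabelian simple groups
with no common factor (no `A i` is isomorphic to any `B j`), then every subdirect
subgroup of `A × B` is all of `A × B`. -/
theorem subdirect_of_products_without_common_factor_eq_top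
    {ι κ : Type*} [Finite ι] [Finite κ]
    (A : ι → Type*) (B : κ → Type*)
    [∀ i, Group (A i)] [∀ j, Group (B j)]
    [∀ i, IsSimpleGroup (A i)] [∀ j, IsSimpleGroup (B j)]
    (hAnab : ∀ i, ∃ a b : A i, a * b ≠ b * a)
    (hBnab : ∀ j, ∃ a b : B j, a * b ≠ b * a)
    (hnoiso : ∀ i j, IsEmpty (A i ≃* B j))
    (H : Subgroup ((∀ i, A i) × (∀ j, B j)))
    (hA : Subgroup.map (MonoidHom.fst (∀ i, A i) (∀ j, B j)) H = ⊤)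
    (hB : Subgroup.map (MonoidHom.snd (∀ i, A i) (∀ j, B j)) H = ⊤) :
    H = ⊤ := by
  classical
  -- surjectivity of the projections in element form
  have hfst : ∀ g : ∀ i, A i, ∃ b, (g, b) ∈ H := by
    intro g
    have : g ∈ Subgroup.map (MonoidHom.fst (∀ i, A i) (∀ j, B j)) H := by rw [hA]; trivial
    obtain ⟨⟨a, b⟩, hab, rfl⟩ := this
    exact ⟨b, hab⟩
  have hsnd : ∀ b : ∀ j, B j, ∃ g, (g, b) ∈ H := by
    intro b
    have : b ∈ Subgroup.map (MonoidHom.snd (∀ i, A i) (∀ j, B j)) H := by rw [hB]; trivial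
    obtain ⟨⟨a, b'⟩, hab, rfl⟩ := this
    exact ⟨a, hab⟩
  -- left and right fibers
  set N₁ : Subgroup (∀ i, A i) := H.comap (MonoidHom.inl _ _) with hN₁def
  set N₂ : Subgroup (∀ j, B j) := H.comap (MonoidHom.inr _ _) with hN₂def
  have hN₁mem : ∀ a, a ∈ N₁ ↔ (a, (1 : ∀ j, B j)) ∈ H := fun a => Iff.rfl
  have hN₂mem : ∀ b, b ∈ N₂ ↔ ((1 : ∀ i, A i), b) ∈ H := fun b => Iff.rfl
  have hN₁n : N₁.Normal := by
    constructor
    intro a ha p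
    obtain ⟨b, hb⟩ := hfst p
    have := H.mul_mem (H.mul_mem hb ((hN₁mem a).mp ha)) (H.inv_mem hb)
    rw [hN₁mem]
    simpa [Prod.mk_mul_mk, mul_assoc] using this
  have hN₂n : N₂.Normal := by
    constructor
    intro b hb p
    obtain ⟨a, ha⟩ := hsnd p
    have := H.mul_mem (H.mul_mem ha ((hN₂mem b).mp hb)) (H.inv_mem ha)
    rw [hN₂mem]
    simpa [Prod.mk_mul_mk, mul_assoc] using this
  -- each coordinate projection of N₁ is nontrivial, else a common factor appears
  have hN₁proj : ∀ i, Subgroup.map (Pi.evalMonoidHom A i) N₁ ≠ ⊥ := by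
    intro i h
    obtain ⟨j, ⟨iso⟩⟩ :=
      exists_iso_of_subdirect B H (Pi.evalMonoidHom A i) (eval_surjective A i) hfst hsnd
        (by
          intro g hg
          have : g i ∈ Subgroup.map (Pi.evalMonoidHom A i) N₁ :=
            ⟨g, (hN₁mem g).mpr hg, rfl⟩
          rw [h, Subgroup.mem_bot] at this
          simpa using this)
    exact (hnoiso i j).false iso.symm
  -- same on the other side, via the swap isomorphism
  have hN₂proj : ∀ j, Subgroup.map (Pi.evalMonoidHom B j) N₂ ≠ ⊥ := by
    intro j h
    set H' : Subgroup ((∀ j, B j) × (∀ i, A i)) :=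
      H.map (MulEquiv.prodComm ..).toMonoidHom with hH'def
    have hmem' : ∀ (b : ∀ j, B j) (a : ∀ i, A i), (b, a) ∈ H' ↔ (a, b) ∈ H := by
      intro b a
      rw [hH'def]
      constructor
      · rintro ⟨⟨a', b'⟩, hp, heq⟩
        have hba : b' = b ∧ a' = a := by simpa [Prod.ext_iff] using heq
        obtain ⟨rfl, rfl⟩ := hba
        exact hp
      · intro hp; exact ⟨(a, b), hp, rfl⟩
    obtain ⟨i, ⟨iso⟩⟩ :=
      exists_iso_of_subdirect A H' (Pi.evalMonoidHom B j) (eval_surjective B j)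
        (fun b => by obtain ⟨a, ha⟩ := hsnd b; exact ⟨a, (hmem' b a).mpr ha⟩)
        (fun a => by obtain ⟨b, hb⟩ := hfst a; exact ⟨b, (hmem' b a).mpr hb⟩)
        (by
          intro b hb
          have : b j ∈ Subgroup.map (Pi.evalMonoidHom B j) N₂ :=
            ⟨b, (hN₂mem b).mpr ((hmem' b 1).mp hb), rfl⟩
          rw [h, Subgroup.mem_bot] at this
          simpa using this)
    exact (hnoiso i j).false iso
  -- hence N₁ and N₂ are everything
  have hN₁top : ∀ a, a ∈ N₁ := by
    intro a
    exact Subgroup.pi_mem_of_mulSingle_mem a fun i =>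
      single_mem_of_eval_ne_bot A N₁ hN₁n i (hAnab i) (hN₁proj i) (a i)
  have hN₂top : ∀ b, b ∈ N₂ := by
    intro b
    exact Subgroup.pi_mem_of_mulSingle_mem b fun j =>
      single_mem_of_eval_ne_bot B N₂ hN₂n j (hBnab j) (hN₂proj j) (b j)
  rw [eq_top_iff]
  rintro ⟨a, b⟩ _
  have : (a, (1 : ∀ j, B j)) * ((1 : ∀ i, A i), b) = (a, b) := by simp
  rw [← this]
  exact H.mul_mem ((hN₁mem a).mp (hN₁top a)) ((hN₂mem b).mp (hN₂top b))
end

section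
/- Let r ≥ 2, let A = ∏_{i=1}^r A_i be a finite product of nonabelian simple groups, let B be a simple group, and let H be a proper subgroup of A × B whose two coordinate projections map H onto A and onto B. Then there exists an index j such that the image of H under the canonical projection A × B → (∏_{i≠j} A_i) × B is a proper subgroup of (∏_{i≠j} A_i) × B. -/
/-- Lemma 6.3(4), abstract form: if `A = ∏_{i=1}^r A_i` (`r ≥ 2`) is a finite product
of nonabelian simple groups, `B` is simple, and `H` is a proper subdirect subgroup of
`A × B`, then for some index `j` the image of `H` in `(∏_{i ≠ j} A_i) × B` is proper. -/
theorem proper_subdirect_image_proper_after_removing_factor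
    (r : ℕ) (hr : 2 ≤ r) (A : Fin r → Type*)
    [∀ i, Group (A i)] [∀ i, IsSimpleGroup (A i)]
    (hnab : ∀ i, ∃ a b : A i, a * b ≠ b * a)
    {B : Type*} [Group B] [IsSimpleGroup B]
    (H : Subgroup ((∀ i, A i) × B))
    (hA : Subgroup.map (MonoidHom.fst (∀ i, A i) B) H = ⊤)
    (hB : Subgroup.map (MonoidHom.snd (∀ i, A i) B) H = ⊤)
    (hne : H ≠ ⊤) :
    ∃ j : Fin r,
      Subgroup.map
        ((Pi.monoidHom fun i : {i : Fin r // i ≠ j} => Pi.evalMonoidHom A i.1).prodMap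
          (MonoidHom.id B)) H
        ≠ ⊤ := by
  by_contra hcon
  push_neg at hcon
  -- surjectivity of the two projections, elementwise
  have hBsurj : ∀ b : B, ∃ a, (a, b) ∈ H := by
    intro b
    have hb : b ∈ Subgroup.map (MonoidHom.snd (∀ i, A i) B) H := by
      rw [hB]; trivial
    obtain ⟨⟨a, b'⟩, hmem, h⟩ := hb
    exact ⟨a, by simpa [show b' = b from h] using hmem⟩
  have hAsurj : ∀ a : ∀ i, A i, ∃ b, (a, b) ∈ H := by
    intro a
    have ha : a ∈ Subgroup.map (MonoidHom.fst (∀ i, A i) B) H := by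
      rw [hA]; trivial
    obtain ⟨⟨a', b⟩, hmem, h⟩ := ha
    exact ⟨b, by simpa [show a' = a from h] using hmem⟩
  -- the subgroup N = {b | (1, b) ∈ H} is normal in B
  set N : Subgroup B := H.comap (MonoidHom.inr (∀ i, A i) B) with hNdef
  have hNmem : ∀ b : B, b ∈ N ↔ ((1 : ∀ i, A i), b) ∈ H := fun b => Iff.rfl
  have hNnormal : N.Normal := by
    constructor
    intro b hb g
    obtain ⟨a, ha⟩ := hBsurj g
    have := H.mul_mem (H.mul_mem ha ((hNmem b).mp hb)) (H.inv_mem ha)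
    rw [hNmem]
    simpa [mul_assoc] using this
  -- N = ⊥ (otherwise H = ⊤)
  have hNbot : N = ⊥ := by
    rcases IsSimpleGroup.eq_bot_or_eq_top_of_normal N hNnormal with h | h
    · exact h
    · exfalso
      apply hne
      rw [eq_top_iff]
      rintro ⟨a, b⟩ -
      obtain ⟨b₀, hb₀⟩ := hAsurj a
      have h1 : ((1 : ∀ i, A i), b₀⁻¹ * b) ∈ H := by
        rw [← hNmem]
        rw [h]
        trivial
      have := H.mul_mem hb₀ h1
      simpa using this
  -- uniqueness of the second coordinate
  have huniq : ∀ (a : ∀ i, A i) (b b' : B), (a, b) ∈ H → (a, b') ∈ H → b = b' := by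
    intro a b b' h1 h2
    have hmem : ((1 : ∀ i, A i), b⁻¹ * b') ∈ H := by
      have := H.mul_mem (H.inv_mem h1) h2
      simpa using this
    have : b⁻¹ * b' ∈ N := (hNmem _).mpr hmem
    rw [hNbot, Subgroup.mem_bot] at this
    have := mul_eq_one_iff_inv_eq.mp this
    simp at this
    exact this
  -- from the (negated) conclusion: every b ∈ B arises over an element supported at j
  have hstep : ∀ (j : Fin r) (b : B), ∃ g : A j, (Pi.mulSingle j g, b) ∈ H := by
    intro j b
    have htop := hcon j
    have hmem : ((fun _ : {i : Fin r // i ≠ j} => 1), b) ∈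
        Subgroup.map
          ((Pi.monoidHom fun i : {i : Fin r // i ≠ j} => Pi.evalMonoidHom A i.1).prodMap
            (MonoidHom.id B)) H := by
      rw [htop]; trivial
    obtain ⟨⟨a, b'⟩, hmem', heq⟩ := hmem
    have hb' : b' = b := congrArg Prod.snd heq
    have ha : ∀ i : {i : Fin r // i ≠ j}, a i.1 = 1 := by
      intro i
      exact congrFun (congrArg Prod.fst heq) i
    have haeq : a = Pi.mulSingle j (a j) := by
      funext i
      by_cases h : i = j
      · subst h; simp
      · rw [Pi.mulSingle_eq_of_ne h]
        exact ha ⟨i, h⟩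
    exact ⟨a j, by rw [← haeq, ← hb']; exact hmem'⟩
  -- two distinct indices
  have h0 : (0 : ℕ) < r := by omega
  have h1 : (1 : ℕ) < r := by omega
  set j0 : Fin r := ⟨0, h0⟩
  set j1 : Fin r := ⟨1, h1⟩
  have hjne : j0 ≠ j1 := by
    intro h
    have := congrArg Fin.val h
    simp [j0, j1] at this
  -- B is commutative
  have hcomm : ∀ b b' : B, b * b' = b' * b := by
    intro b b'
    obtain ⟨g, hg⟩ := hstep j0 b
    obtain ⟨g', hg'⟩ := hstep j1 b'
    have hac : Pi.mulSingle j0 g * Pi.mulSingle j1 g' =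
        Pi.mulSingle j1 g' * Pi.mulSingle j0 g := by
      funext i
      by_cases hi0 : i = j0
      · subst hi0
        have : Pi.mulSingle j1 g' j0 = 1 := Pi.mulSingle_eq_of_ne hjne g'
        simp [this]
      · by_cases hi1 : i = j1
        · subst hi1
          have : Pi.mulSingle j0 g j1 = 1 := Pi.mulSingle_eq_of_ne (Ne.symm hjne) g
          simp [this]
        · have e0 : Pi.mulSingle j0 g i = 1 := Pi.mulSingle_eq_of_ne hi0 g
          have e1 : Pi.mulSingle j1 g' i = 1 := Pi.mulSingle_eq_of_ne hi1 g'
          simp [e0, e1]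
    have hm1 := H.mul_mem hg hg'
    have hm2 := H.mul_mem hg' hg
    rw [Prod.mk_mul_mk] at hm1 hm2
    rw [hac] at hm1
    exact huniq _ _ _ hm1 hm2
  -- the kernel at index j0
  set K : Subgroup (A j0) :=
    H.comap ((MonoidHom.inl (∀ i, A i) B).comp (MonoidHom.mulSingle A j0)) with hKdef
  have hKmem : ∀ g : A j0, g ∈ K ↔ (Pi.mulSingle j0 g, (1 : B)) ∈ H := fun g => Iff.rfl
  have hKnormal : K.Normal := by
    constructor
    intro g hg h
    obtain ⟨bh, hbh⟩ := hAsurj (Pi.mulSingle j0 h)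
    have := H.mul_mem (H.mul_mem hbh ((hKmem g).mp hg)) (H.inv_mem hbh)
    rw [hKmem]
    have harr : Pi.mulSingle j0 h * Pi.mulSingle j0 g * (Pi.mulSingle j0 h)⁻¹ =
        Pi.mulSingle j0 (h * g * h⁻¹) := by
      rw [Pi.mulSingle_mul, Pi.mulSingle_mul, Pi.mulSingle_inv]
    simpa [harr, mul_assoc] using this
  -- K contains a nontrivial commutator
  obtain ⟨x, y, hxy⟩ := hnab j0
  obtain ⟨bx, hbx⟩ := hAsurj (Pi.mulSingle j0 x)
  obtain ⟨by', hby⟩ := hAsurj (Pi.mulSingle j0 y)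
  have hcK : x * y * x⁻¹ * y⁻¹ ∈ K := by
    have hm := H.mul_mem (H.mul_mem (H.mul_mem hbx hby) (H.inv_mem hbx)) (H.inv_mem hby)
    rw [hKmem]
    have hb1 : bx * by' * bx⁻¹ * by'⁻¹ = 1 := by
      rw [hcomm bx by']
      group
    have ha1 : Pi.mulSingle j0 x * Pi.mulSingle j0 y * (Pi.mulSingle j0 x)⁻¹ *
        (Pi.mulSingle j0 y)⁻¹ = Pi.mulSingle j0 (x * y * x⁻¹ * y⁻¹) := by
      rw [Pi.mulSingle_mul, Pi.mulSingle_mul, Pi.mulSingle_mul, Pi.mulSingle_inv,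
        Pi.mulSingle_inv]
    simpa [ha1, hb1] using hm
  have hKne : K ≠ ⊥ := by
    intro hbot
    rw [hbot, Subgroup.mem_bot] at hcK
    apply hxy
    rw [mul_inv_eq_one, mul_inv_eq_iff_eq_mul] at hcK
    exact hcK
  have hKtop : K = ⊤ := by
    rcases IsSimpleGroup.eq_bot_or_eq_top_of_normal K hKnormal with h | h
    · exact absurd h hKne
    · exact h
  -- conclude B is trivial: contradiction
  obtain ⟨b, hbne⟩ := exists_ne (1 : B)
  obtain ⟨g, hg⟩ := hstep j0 b
  have hg1 : (Pi.mulSingle j0 g, (1 : B)) ∈ H := by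
    rw [← hKmem]
    rw [hKtop]
    trivial
  exact hbne (huniq _ _ _ hg hg1)
end
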